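/- Consider a billiard trajectory inside a cone with vertex at the origin, with p k and p (k+1) linearly independent for every k. Assume the last coordinate of each p k is positive, set q k := ((p k)ₙ)⁻¹ • p k (where (p k)ₙ denotes the last coordinate, so each q k has last coordinate 1), and assume there is a > 0 with ‖q k‖ ≤ a for all k. Then the series ∑ θ k and ∑ ‖q (k+1) − q k‖ both converge (i.e. the sequences (θ k) and (‖q (k+1) − q k‖) are summable). (Lemma 2.3, part 2.) -/

import Mathlib

open InnerProductGeometry RealInnerProductSpace Filter


/-- Key geometric inequality: if two vectors both have some coordinate equal to 1,
then the squared distance between them is bounded by the "area" term. -/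
lemma chord_sq_le {n : ℕ} (x y : EuclideanSpace ℝ (Fin n)) (i : Fin n)
    (hx : x i = 1) (hy : y i = 1) :
    ‖y - x‖ ^ 2 ≤ ‖x‖ ^ 2 * ‖y‖ ^ 2 - ⟪x, y⟫ ^ 2 := by
  by_cases hd : y - x = 0
  · rw [hd, norm_zero]
    have h := abs_real_inner_le_norm x y
    nlinarith [abs_nonneg (⟪x, y⟫ : ℝ), sq_abs (⟪x, y⟫ : ℝ)]
  · set d := y - x with hdd
    have hdn : ‖d‖ ≠ 0 := norm_ne_zero_iff.mpr hd
    have hdn2 : (0:ℝ) < ‖d‖ ^ 2 := by positivity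
    set c : ℝ := ⟪x, d⟫ / ‖d‖ ^ 2 with hc
    set w : EuclideanSpace ℝ (Fin n) := x - c • d with hw
    have hdi : d i = 0 := by
      simp [hdd, PiLp.sub_apply, hx, hy]
    have hwi : w i = 1 := by
      simp [hw, PiLp.sub_apply, PiLp.smul_apply, hdi, hx]
    -- 1 ≤ ‖w‖
    have hwn : 1 ≤ ‖w‖ := by
      have h1 : ⟪EuclideanSpace.single i (1:ℝ), w⟫ = w i := by
        rw [EuclideanSpace.inner_single_left]; simp
      have h2 := real_inner_le_norm (EuclideanSpace.single i (1:ℝ)) w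
      rw [h1, hwi, EuclideanSpace.norm_single] at h2
      simpa using h2
    have hxd : ⟪x, d⟫ = ⟪x, y⟫ - ‖x‖ ^ 2 := by
      rw [hdd, inner_sub_right, real_inner_self_eq_norm_sq]
    have hd2 : ‖d‖ ^ 2 = ‖y‖ ^ 2 - 2 * ⟪x, y⟫ + ‖x‖ ^ 2 := by
      rw [hdd, norm_sub_sq_real, real_inner_comm]
    have hw2 : ‖w‖ ^ 2 = ‖x‖ ^ 2 - 2 * (c * ⟪x, d⟫) + c ^ 2 * ‖d‖ ^ 2 := by
      rw [hw, norm_sub_sq_real, real_inner_smul_right, norm_smul]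
      simp [mul_pow, sq_abs]
    have hcd : c * ‖d‖ ^ 2 = ⟪x, d⟫ := by
      rw [hc]; field_simp
    have h1 : ‖d‖ ^ 2 ≤ ‖w‖ ^ 2 * ‖d‖ ^ 2 := by
      have h0 : 1 ≤ ‖w‖ ^ 2 := by nlinarith [hwn]
      nlinarith [mul_le_mul_of_nonneg_right h0 hdn2.le]
    have h2 : ‖w‖ ^ 2 * ‖d‖ ^ 2 = ‖x‖ ^ 2 * ‖d‖ ^ 2 - ⟪x, d⟫ ^ 2 := by
      rw [hw2]; nlinarith [hcd]
    have h3 : ‖x‖ ^ 2 * ‖d‖ ^ 2 - ⟪x, d⟫ ^ 2 = ‖x‖ ^ 2 * ‖y‖ ^ 2 - ⟪x, y⟫ ^ 2 := by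
      rw [hxd, hd2]; ring
    calc ‖y - x‖ ^ 2 = ‖d‖ ^ 2 := by rw [hdd]
      _ ≤ ‖w‖ ^ 2 * ‖d‖ ^ 2 := h1
      _ = ‖x‖ ^ 2 * ‖y‖ ^ 2 - ⟪x, y⟫ ^ 2 := by rw [h2, h3]

/-- Lemma 2.3, part 2: along a billiard trajectory inside a cone with vertex at
the origin over a bounded base `γ ⊂ {xⁿ = 1}`, the series `∑ θ k` and
`∑ ‖q (k+1) − q k‖` converge. -/
theorem billiard_cone_summable {n : ℕ} (hn : 2 ≤ n)
    (p ν v : ℕ → EuclideanSpace ℝ (Fin n))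
    (hp0 : ∀ k, p k ≠ 0) (hpne : ∀ k, p (k + 1) ≠ p k)
    (hν : ∀ k, ‖ν k‖ = 1) (hνp : ∀ k, ⟪ν k, p k⟫ = 0)
    (hv : ∀ k, v k = ‖p (k + 1) - p k‖⁻¹ • (p (k + 1) - p k))
    (hrefl : ∀ k, v (k + 1) = v k - (2 * ⟪v k, ν (k + 1)⟫) • ν (k + 1))
    (hvν : ∀ k, 0 < ⟪v k, ν k⟫)
    (hli : ∀ k, LinearIndependent ℝ ![p k, p (k + 1)])
    (θ : ℕ → ℝ) (hθ : ∀ k, θ k = angle (p k) (p (k + 1)))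
    (hlast : ∀ k, 0 < p k ⟨n - 1, by omega⟩)
    (q : ℕ → EuclideanSpace ℝ (Fin n))
    (hq : ∀ k, q k = (p k ⟨n - 1, by omega⟩)⁻¹ • p k)
    (a : ℝ) (ha : 0 < a) (hqa : ∀ k, ‖q k‖ ≤ a) :
    Summable θ ∧ Summable (fun k => ‖q (k + 1) - q k‖) := by
  set α : ℕ → ℝ := fun k => angle (v k) (p k) with hα
  -- basic facts
  have hsub : ∀ k, p (k + 1) - p k ≠ 0 := fun k => sub_ne_zero.mpr (hpne k)
  have ht : ∀ k, (0:ℝ) < ‖p (k + 1) - p k‖ := fun k => norm_pos_iff.mpr (hsub k)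
  have hvt : ∀ k, p (k + 1) - p k = ‖p (k + 1) - p k‖ • v k := by
    intro k
    rw [hv k, smul_smul, mul_inv_cancel₀ (ht k).ne', one_smul]
  have hv1 : ∀ k, ‖v k‖ = 1 := by
    intro k
    rw [hv k, norm_smul, norm_inv, norm_norm, inv_mul_cancel₀ (ht k).ne']
  -- the angle recursion: α (k+1) = α k - θ k
  have hkey : ∀ k, α (k + 1) = α k - θ k := by
    intro k
    -- step 1: angle (v (k+1)) (p (k+1)) = angle (v k) (p (k+1))
    have hinner : ⟪v (k + 1), p (k + 1)⟫ = ⟪v k, p (k + 1)⟫ := by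
      rw [hrefl k, inner_sub_left, real_inner_smul_left, hνp (k + 1)]
      ring
    have hstep1 : α (k + 1) = angle (v k) (p (k + 1)) := by
      show InnerProductGeometry.angle (v (k + 1)) (p (k + 1)) = _
      unfold InnerProductGeometry.angle
      rw [hinner, hv1 k, hv1 (k + 1)]
    -- step 2: triangle angle sum with vertices 0, p k, p (k+1)
    have htri := EuclideanGeometry.angle_add_angle_add_angle_eq_pi
      (p₁ := (0 : EuclideanSpace ℝ (Fin n))) (p₂ := p k) (p₃ := p (k + 1))
      (hp0 k)
    simp only [EuclideanGeometry.angle, vsub_eq_sub, zero_sub, sub_zero] at htri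
    have hA1 : angle (-p k) (p (k + 1) - p k) = Real.pi - α k := by
      rw [hvt k, angle_smul_right_of_pos _ _ (ht k), angle_neg_left, angle_comm]
    have hA2 : angle (p k - p (k + 1)) (-p (k + 1)) = angle (v k) (p (k + 1)) := by
      rw [← angle_neg_neg, neg_sub, neg_neg, hvt k, angle_smul_left_of_pos _ _ (ht k)]
    have hA3 : angle (p (k + 1)) (p k) = θ k := by
      rw [angle_comm, ← hθ k]
    rw [hA1, hA2, hA3] at htri
    rw [hstep1]
    linarith
  have hθnn : ∀ k, 0 ≤ θ k := fun k => (hθ k) ▸ angle_nonneg _ _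
  have hθsum : Summable θ := by
    apply summable_of_sum_range_le (c := α 0) hθnn
    intro N
    have : ∀ k, θ k = α k - α (k + 1) := fun k => by linarith [hkey k]
    calc ∑ i ∈ Finset.range N, θ i = ∑ i ∈ Finset.range N, (α i - α (i + 1)) := by
          exact Finset.sum_congr rfl fun i _ => this i
      _ = α 0 - α N := Finset.sum_range_sub' α N
      _ ≤ α 0 := by linarith [angle_nonneg (v N) (p N)]
  refine ⟨hθsum, ?_⟩
  -- part 2: comparison with a^2 * θ
  set i : Fin n := ⟨n - 1, by omega⟩ with hi
  have hq1 : ∀ k, q k i = 1 := by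
    intro k
    rw [hq k]
    simp only [PiLp.smul_apply, smul_eq_mul]
    exact inv_mul_cancel₀ (hlast k).ne'
  have hqangle : ∀ k, angle (q k) (q (k + 1)) = θ k := by
    intro k
    rw [hq k, hq (k + 1), angle_smul_left_of_pos _ _ (inv_pos.mpr (hlast k)),
      angle_smul_right_of_pos _ _ (inv_pos.mpr (hlast (k + 1))), hθ k]
  have hbound : ∀ k, ‖q (k + 1) - q k‖ ≤ a ^ 2 * θ k := by
    intro k
    have key := chord_sq_le (q k) (q (k + 1)) i (hq1 k) (hq1 (k + 1))
    have hcos := cos_angle_mul_norm_mul_norm (q k) (q (k + 1))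
    rw [hqangle k] at hcos
    have hsin0 : 0 ≤ Real.sin (θ k) :=
      Real.sin_nonneg_of_nonneg_of_le_pi (hθnn k) ((hθ k) ▸ angle_le_pi _ _)
    have hsinle : Real.sin (θ k) ≤ θ k := by
      rcases eq_or_lt_of_le (hθnn k) with h | h
      · rw [← h]; simp
      · exact (Real.sin_lt h).le
    have hna : 0 ≤ ‖q k‖ * ‖q (k + 1)‖ := by positivity
    have hsq : ‖q (k + 1) - q k‖ ^ 2 ≤ (a ^ 2 * θ k) ^ 2 := by
      have e1 : ‖q k‖ ^ 2 * ‖q (k + 1)‖ ^ 2 - ⟪q k, q (k + 1)⟫ ^ 2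
          = (‖q k‖ * ‖q (k + 1)‖ * Real.sin (θ k)) ^ 2 := by
        rw [← hcos]
        have := Real.sin_sq_add_cos_sq (θ k)
        nlinarith [this]
      have e2 : (‖q k‖ * ‖q (k + 1)‖ * Real.sin (θ k)) ^ 2 ≤ (a ^ 2 * θ k) ^ 2 := by
        have h1 : ‖q k‖ * ‖q (k + 1)‖ * Real.sin (θ k) ≤ a ^ 2 * θ k := by
          have : ‖q k‖ * ‖q (k + 1)‖ ≤ a ^ 2 := by
            nlinarith [hqa k, hqa (k + 1), norm_nonneg (q k), norm_nonneg (q (k + 1))]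
          nlinarith [hθnn k, hsin0, hsinle, hna]
        have h2 : 0 ≤ ‖q k‖ * ‖q (k + 1)‖ * Real.sin (θ k) := by positivity
        nlinarith [h1, h2]
      calc ‖q (k + 1) - q k‖ ^ 2 ≤ _ := key
        _ = (‖q k‖ * ‖q (k + 1)‖ * Real.sin (θ k)) ^ 2 := e1
        _ ≤ (a ^ 2 * θ k) ^ 2 := e2
    have h3 := Real.sqrt_le_sqrt hsq
    rwa [Real.sqrt_sq (norm_nonneg _), Real.sqrt_sq (mul_nonneg (sq_nonneg a) (hθnn k))] at h3
  exact Summable.of_nonneg_of_le (fun k => norm_nonneg _) hbound (hθsum.mul_left (a ^ 2))
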